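/- arXiv:2111.15645 — 5 statements merged into one kernel-verified Lean document; each statement's English description precedes it below -/
import Mathlib

section
/- If f₁, ..., f_k : ℝⁿ → ℝ are L-smooth (gradients L-Lipschitz) and δ-strongly convex (0 < δ ≤ L), a point s satisfies f_i(s) > f_j(s) for all j ≠ i, and a point s⁺ ≠ s satisfies with equality f_i(s) + ∇f_i(s)ᵀ(s⁺ - s) = f_j(s_j) + ∇f_j(s_j)ᵀ(s⁺ - s_j) + (L/2)‖s⁺ - s_j‖² for every j ≠ i (where s_j are points with f_j(s_j) ≥ f_l(s_j) for all l), then f_i(s⁺) > f_j(s⁺) for all j ≠ i. -/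
open RealInnerProductSpace

/-- **Preservation of validity** (Theorem 3.4 of the paper).
If each `f j` is `δ`-strongly convex and `L`-smooth, the point `s i` is strictly valid
for the `i`-th piece, each `s j` satisfies `f j (s j) ≥ f l (s j)` for all `l`, and
`s⁺ ≠ s i` satisfies all constraints with equality, then `f i s⁺ > f j s⁺` for `j ≠ i`. -/
theorem survey_descent_preservation_of_validity
    (n k : ℕ) (f : Fin k → EuclideanSpace ℝ (Fin n) → ℝ)
    (δ L : ℝ) (hδ : 0 < δ) (hδL : δ ≤ L)
    (hstrong : ∀ j (x y : EuclideanSpace ℝ (Fin n)),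
      f j x + ⟪gradient (f j) x, y - x⟫ + δ / 2 * ‖y - x‖ ^ 2 ≤ f j y)
    (hsmooth : ∀ j (x y : EuclideanSpace ℝ (Fin n)),
      f j y ≤ f j x + ⟪gradient (f j) x, y - x⟫ + L / 2 * ‖y - x‖ ^ 2)
    (s : Fin k → EuclideanSpace ℝ (Fin n)) (i : Fin k)
    (hvalid : ∀ j, j ≠ i → f j (s i) < f i (s i))
    (hmax : ∀ j l, f l (s j) ≤ f j (s j))
    (splus : EuclideanSpace ℝ (Fin n)) (hne : splus ≠ s i)
    (htight : ∀ j, j ≠ i →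
      f i (s i) + ⟪gradient (f i) (s i), splus - s i⟫ =
        f j (s j) + ⟪gradient (f j) (s j), splus - s j⟫ + L / 2 * ‖splus - s j‖ ^ 2) :
    ∀ j, j ≠ i → f j splus < f i splus := by
  intro j hj
  have h1 : f j splus ≤ f i (s i) + ⟪gradient (f i) (s i), splus - s i⟫ := by
    calc f j splus ≤ f j (s j) + ⟪gradient (f j) (s j), splus - s j⟫
          + L / 2 * ‖splus - s j‖ ^ 2 := hsmooth j (s j) splus
      _ = f i (s i) + ⟪gradient (f i) (s i), splus - s i⟫ := (htight j hj).symm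
  have h2 : f i (s i) + ⟪gradient (f i) (s i), splus - s i⟫
      + δ / 2 * ‖splus - s i‖ ^ 2 ≤ f i splus := hstrong i (s i) splus
  have hpos : 0 < δ / 2 * ‖splus - s i‖ ^ 2 := by
    have h3 : splus - s i ≠ 0 := sub_ne_zero.mpr hne
    have h4 : 0 < ‖splus - s i‖ := norm_pos_iff.mpr h3
    positivity
  linarith
end

section
/- Let f : ℝⁿ → ℝ be δ-strongly convex and L-smooth (0 < δ ≤ L), let U ⊆ ℝⁿ be a nonempty closed affine subspace, and let x̄ = argmin_{x ∈ U} f(x). Then for any s ∈ ℝⁿ and any L̃ ≥ L, the projected gradient step p = proj_U(s - (1/L̃)∇f(s)) satisfies ‖p - x̄‖² ≤ (1 - δ/L̃)‖s - x̄‖². -/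
open RealInnerProductSpace

/-- **Projected gradient descent contraction onto an affine subspace**
(first part of Theorem 5.1 of the paper). If `f` is `δ`-strongly convex and `L`-smooth,
`U` is a nonempty closed affine subspace, `x̄` is the minimizer of `f` over `U`, and `p`
is the Euclidean projection onto `U` of the gradient step `s - (1/L̃) • ∇f(s)` with
`L̃ ≥ L`, then `‖p - x̄‖² ≤ (1 - δ/L̃) ‖s - x̄‖²`. -/
theorem projected_gradient_descent_contraction
    (n : ℕ) (f : EuclideanSpace ℝ (Fin n) → ℝ)
    (δ L : ℝ) (hδ : 0 < δ) (hδL : δ ≤ L)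
    (hstrong : ∀ x y : EuclideanSpace ℝ (Fin n),
      f x + ⟪gradient f x, y - x⟫ + δ / 2 * ‖y - x‖ ^ 2 ≤ f y)
    (hsmooth : ∀ x y : EuclideanSpace ℝ (Fin n),
      f y ≤ f x + ⟪gradient f x, y - x⟫ + L / 2 * ‖y - x‖ ^ 2)
    (U : AffineSubspace ℝ (EuclideanSpace ℝ (Fin n)))
    (hUne : (U : Set (EuclideanSpace ℝ (Fin n))).Nonempty)
    (hUclosed : IsClosed (U : Set (EuclideanSpace ℝ (Fin n))))
    (xbar : EuclideanSpace ℝ (Fin n)) (hxbarU : xbar ∈ U)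
    (hxbarmin : ∀ q ∈ U, f xbar ≤ f q)
    (s : EuclideanSpace ℝ (Fin n)) (Lt : ℝ) (hLt : L ≤ Lt)
    (p : EuclideanSpace ℝ (Fin n)) (hpU : p ∈ U)
    (hproj : ∀ q ∈ U, ‖s - (1 / Lt) • gradient f s - p‖ ≤ ‖s - (1 / Lt) • gradient f s - q‖) :
    ‖p - xbar‖ ^ 2 ≤ (1 - δ / Lt) * ‖s - xbar‖ ^ 2 := by
  have hLt0 : 0 < Lt := lt_of_lt_of_le hδ (hδL.trans hLt)
  set g := gradient f s with hg
  set y := s - (1 / Lt) • g with hy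
  -- Orthogonality of the projection residual to directions in U
  have horth : ⟪y - p, xbar - p⟫ = 0 := by
    set v : EuclideanSpace ℝ (Fin n) := xbar - p with hv
    have key : ∀ θ : ℝ, 0 ≤ -(2 * θ * ⟪y - p, v⟫) + θ ^ 2 * ‖v‖ ^ 2 := by
      intro θ
      have hq : θ • (xbar -ᵥ p) +ᵥ p ∈ U :=
        AffineSubspace.smul_vsub_vadd_mem U θ hxbarU hpU hpU
      have h1 := hproj _ hq
      have h2 : y - (θ • (xbar -ᵥ p) +ᵥ p) = (y - p) - θ • v := by
        simp only [vsub_eq_sub, vadd_eq_add, hv]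
        abel
      rw [h2] at h1
      have h3 : ‖y - p‖ ^ 2 ≤ ‖(y - p) - θ • v‖ ^ 2 :=
        pow_le_pow_left₀ (norm_nonneg _) h1 2
      have h4 : ‖(y - p) - θ • v‖ ^ 2
          = ‖y - p‖ ^ 2 - 2 * (θ * ⟪y - p, v⟫) + θ ^ 2 * ‖v‖ ^ 2 := by
        rw [@norm_sub_sq_real, real_inner_smul_right, norm_smul, Real.norm_eq_abs,
          mul_pow, sq_abs]
      rw [h4] at h3
      linarith
    rcases eq_or_ne v 0 with hv0 | hv0
    · rw [hv0, inner_zero_right]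
    · have hvpos : 0 < ‖v‖ := norm_pos_iff.mpr hv0
      have hvN : 0 < ‖v‖ ^ 2 := by positivity
      set c : ℝ := ⟪y - p, v⟫ with hc
      have h1 := key (c / ‖v‖ ^ 2)
      have h2 : (c / ‖v‖ ^ 2) ^ 2 * ‖v‖ ^ 2 = (c / ‖v‖ ^ 2) * c := by
        field_simp
      rw [h2] at h1
      have h5 : (c / ‖v‖ ^ 2) * c ≤ 0 := by linarith
      have h6 : 0 ≤ (c / ‖v‖ ^ 2) * c := by
        rw [div_mul_eq_mul_div]
        exact div_nonneg (mul_self_nonneg c) (le_of_lt hvN)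
      have h7 : (c / ‖v‖ ^ 2) * c = 0 := le_antisymm h5 h6
      have h8 : c * c = 0 := by
        field_simp at h7
        linear_combination h7
      exact mul_self_eq_zero.mp h8
  -- turn orthogonality into a relation between inner products
  have hgo : ⟪g, xbar - p⟫ = Lt * ⟪s - p, xbar - p⟫ := by
    have h1 : y - p = (s - p) - (1 / Lt) • g := by rw [hy]; abel
    rw [h1, inner_sub_left, real_inner_smul_left] at horth
    have hLtne : Lt ≠ 0 := ne_of_gt hLt0
    have h2 : Lt * (⟪s - p, xbar - p⟫ - 1 / Lt * ⟪g, xbar - p⟫)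
        = Lt * 0 := by rw [horth]
    rw [mul_zero, mul_sub, ← mul_assoc, mul_one_div, div_self hLtne, one_mul,
      sub_eq_zero] at h2
    linarith
  have h1 := hstrong s xbar
  have h2 := hsmooth s p
  have h3 := hxbarmin p hpU
  have e1 : ⟪g, p - s⟫ - ⟪g, xbar - s⟫ = -⟪g, xbar - p⟫ := by
    rw [← inner_sub_right, ← inner_neg_right]
    congr 1
    abel
  have e3 : ⟪s - p, xbar - p⟫ = ‖s - p‖ ^ 2 - ⟪s - p, s - xbar⟫ := by
    have : xbar - p = (s - p) - (s - xbar) := by abel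
    rw [this, inner_sub_right, real_inner_self_eq_norm_sq]
  have e4 : ‖p - xbar‖ ^ 2
      = ‖s - xbar‖ ^ 2 - 2 * ⟪s - p, s - xbar⟫ + ‖s - p‖ ^ 2 := by
    have : p - xbar = (s - xbar) - (s - p) := by abel
    rw [this, @norm_sub_sq_real, real_inner_comm]
  have e5 : ‖xbar - s‖ = ‖s - xbar‖ := norm_sub_rev _ _
  have e6 : ‖p - s‖ = ‖s - p‖ := norm_sub_rev _ _
  rw [e5] at h1
  rw [e6] at h2
  -- combine: δ * ‖s-xbar‖² + Lt * ‖s-p‖² ≤ 2 * Lt * ⟪s-p, s-xbar⟫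
  have hkey : δ * ‖s - xbar‖ ^ 2 + Lt * ‖s - p‖ ^ 2
      ≤ 2 * Lt * ⟪s - p, s - xbar⟫ := by
    nlinarith [sq_nonneg ‖s - p‖, mul_nonneg (sub_nonneg.mpr hLt) (sq_nonneg ‖s - p‖)]
  have hdiv : δ / Lt * Lt = δ := div_mul_cancel₀ _ (ne_of_gt hLt0)
  rw [e4]
  nlinarith [hkey, hdiv, hLt0]
end

section
/- Let f : ℝⁿ → ℝ be δ-strongly convex and L-smooth, U a nonempty closed affine subspace, x̄ = argmin_{x ∈ U} f(x), s ∈ ℝⁿ, and L̃ ≥ L. Then the projected gradient step p = proj_U(s - (1/L̃)∇f(s)) satisfies f(p) - f(x̄) ≤ (L̃/2)(1 - δ/L̃)‖s - x̄‖². -/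
open RealInnerProductSpace
set_option maxHeartbeats 1000000

/-- **Projected gradient descent contraction onto an affine subspace**
(first part of Theorem 5.1 of the paper). If `f` is `δ`-strongly convex and `L`-smooth,
`U` is a nonempty closed affine subspace, `x̄` is the minimizer of `f` over `U`, and `p`
is the Euclidean projection onto `U` of the gradient step `s - (1/L̃) • ∇f(s)` with
`L̃ ≥ L`, then `‖p - x̄‖² ≤ (1 - δ/L̃) ‖s - x̄‖²`. -/
theorem projected_gradient_descent_value_decrease
    (n : ℕ) (f : EuclideanSpace ℝ (Fin n) → ℝ)
    (δ L : ℝ) (hδ : 0 < δ) (hδL : δ ≤ L)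
    (hstrong : ∀ x y : EuclideanSpace ℝ (Fin n),
      f x + ⟪gradient f x, y - x⟫ + δ / 2 * ‖y - x‖ ^ 2 ≤ f y)
    (hsmooth : ∀ x y : EuclideanSpace ℝ (Fin n),
      f y ≤ f x + ⟪gradient f x, y - x⟫ + L / 2 * ‖y - x‖ ^ 2)
    (U : AffineSubspace ℝ (EuclideanSpace ℝ (Fin n)))
    (hUne : (U : Set (EuclideanSpace ℝ (Fin n))).Nonempty)
    (hUclosed : IsClosed (U : Set (EuclideanSpace ℝ (Fin n))))
    (xbar : EuclideanSpace ℝ (Fin n)) (hxbarU : xbar ∈ U)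
    (hxbarmin : ∀ q ∈ U, f xbar ≤ f q)
    (s : EuclideanSpace ℝ (Fin n)) (Lt : ℝ) (hLt : L ≤ Lt)
    (p : EuclideanSpace ℝ (Fin n)) (hpU : p ∈ U)
    (hproj : ∀ q ∈ U, ‖s - (1 / Lt) • gradient f s - p‖ ≤ ‖s - (1 / Lt) • gradient f s - q‖) :
    f p - f xbar ≤ Lt / 2 * (1 - δ / Lt) * ‖s - xbar‖ ^ 2 := by
  have hLtpos : (0:ℝ) < Lt := lt_of_lt_of_le hδ (hδL.trans hLt)
  set g := gradient f s with hg
  set z := s - (1/Lt) • g with hz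
  -- projection inequality
  have hc : ⟪z - p, xbar - p⟫ ≤ 0 := by
    by_contra hcon
    push_neg at hcon
    set c := ⟪z - p, xbar - p⟫ with hcdef
    set a := ‖xbar - p‖^2 with ha
    have hane : 0 ≤ a := by positivity
    set t : ℝ := c / (a + 1) with ht
    have htpos : 0 < t := div_pos hcon (by linarith)
    have hq : t • (xbar -ᵥ p) +ᵥ p ∈ U := AffineSubspace.smul_vsub_vadd_mem U t hxbarU hpU hpU
    have h1 := hproj _ hq
    have heq : z - (t • (xbar -ᵥ p) +ᵥ p) = (z - p) - t • (xbar - p) := by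
      simp only [vsub_eq_sub, vadd_eq_add]
      abel
    rw [heq] at h1
    have hrhs := norm_sub_sq_real (z - p) (t • (xbar - p))
    have e1 : ⟪z - p, t • (xbar - p)⟫ = t * c := real_inner_smul_right _ _ _
    have e2 : ‖t • (xbar - p)‖^2 = t^2 * a := by
      rw [norm_smul, mul_pow, ha]
      simp [sq_abs]
    rw [e1, e2] at hrhs
    have h2 : ‖z - p‖^2 ≤ ‖z - p‖^2 - 2*(t*c) + t^2*a := by
      rw [← hrhs]
      exact pow_le_pow_left₀ (norm_nonneg _) h1 2
    have h5 : t * (a + 1) = c := by rw [ht]; field_simp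
    nlinarith [h2, h5, htpos, hane, hcon, mul_pos htpos htpos, mul_pos htpos hcon]
  have hkey : ⟪g, p - xbar⟫ ≤ Lt * ⟪s - p, p - xbar⟫ := by
    have hexp : z - p = (s - p) - (1/Lt) • g := by rw [hz]; abel
    rw [hexp, inner_sub_left, real_inner_smul_left] at hc
    have h1 : ⟪s - p, xbar - p⟫ = - ⟪s - p, p - xbar⟫ := by
      rw [show xbar - p = -(p - xbar) by abel, inner_neg_right]
    have h2 : ⟪g, xbar - p⟫ = - ⟪g, p - xbar⟫ := by
      rw [show xbar - p = -(p - xbar) by abel, inner_neg_right]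
    rw [h1, h2] at hc
    have hA : (1/Lt) * ⟪g, p - xbar⟫ ≤ ⟪s - p, p - xbar⟫ := by linarith
    calc ⟪g, p - xbar⟫ = Lt * ((1/Lt) * ⟪g, p - xbar⟫) := by field_simp
      _ ≤ Lt * ⟪s - p, p - xbar⟫ := mul_le_mul_of_nonneg_left hA hLtpos.le
  have hs1 := hsmooth s p
  have hs2 := hstrong s xbar
  rw [← hg] at hs1 hs2
  have hinner : ⟪g, p - s⟫ = ⟪g, p - xbar⟫ + ⟪g, xbar - s⟫ := by
    rw [← inner_add_right]
    congr 1
    abel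
  have hnorm : ‖s - xbar‖^2 = ‖s - p‖^2 - 2 * ⟪s - p, xbar - p⟫ + ‖xbar - p‖^2 := by
    rw [show s - xbar = (s - p) - (xbar - p) by abel, norm_sub_sq_real]
  have hLtnorm : Lt * ‖s - xbar‖^2
      = Lt * ‖s - p‖^2 - 2 * (Lt * ⟪s - p, xbar - p⟫) + Lt * ‖xbar - p‖^2 := by
    rw [hnorm]; ring
  have hkey2 : Lt * ⟪s - p, p - xbar⟫ = -(Lt * ⟪s - p, xbar - p⟫) := by
    rw [show xbar - p = -(p - xbar) by abel, inner_neg_right]; ring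
  have hps : ‖p - s‖ = ‖s - p‖ := norm_sub_rev _ _
  have hxs : ‖xbar - s‖ = ‖s - xbar‖ := norm_sub_rev _ _
  rw [hps] at hs1
  rw [hxs] at hs2
  have P1 : 0 ≤ Lt * ‖xbar - p‖^2 := by positivity
  have P2 : 0 ≤ (Lt - L) * ‖s - p‖^2 := by
    apply mul_nonneg (by linarith) (by positivity)
  have hgoal : Lt / 2 * (1 - δ / Lt) * ‖s - xbar‖ ^ 2
      = Lt * ‖s - xbar‖^2 / 2 - δ / 2 * ‖s - xbar‖ ^ 2 := by
    field_simp
  rw [hgoal]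
  linarith [hs1, hs2, hinner, hkey, hkey2, hLtnorm, P1, P2]
end

section
/- Suppose f₁,...,f_k : ℝⁿ → ℝ are δ-strongly convex, L-smooth functions, U is a closed affine subspace, and x̄ ∈ U satisfies proj_U(s - (1/L̃)∇f_j(s)) contraction: ‖proj_U(s - (1/L̃)∇f_j(s)) - x̄‖² ≤ (1 - δ/L̃)‖s - x̄‖² for all j and all L̃ ≥ L. Let λ̄₁,...,λ̄_k > 0 be weights summing to 1, fix i, and given points s₁,...,s_k define s̃_i = (1/(2-λ̄_i))·proj_U(s_i - (λ̄_i/L)∇f_i(s_i)) + Σ_{j≠i} (λ̄_j/(2-λ̄_i))·proj_U(s_j - (1/L)∇f_j(s_j)). Let λ̄_min = min_j λ̄_j. Then ‖s̃_i - x̄‖² ≤ (1 - λ̄_min·δ/L)·max_j ‖s_j - x̄‖². -/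
open RealInnerProductSpace

set_option maxHeartbeats 1600000 in
/-- **Contraction of the convex combination of projected gradient steps**
(Lemma 5.2 of the paper). Given the projected-GD contraction hypothesis for every
component `f j`, every point, and every step-control `L̃ ≥ L`, the point `s̃ᵢ` defined
as the convex combination of `U`-projected gradient steps contracts towards `x̄` with
ratio `1 - λ̄_min δ / L`. -/
theorem survey_descent_combination_contraction
    (n k : ℕ) [NeZero k] (f : Fin k → EuclideanSpace ℝ (Fin n) → ℝ)
    (δ L : ℝ) (hδ : 0 < δ) (hδL : δ ≤ L)
    (projU : EuclideanSpace ℝ (Fin n) → EuclideanSpace ℝ (Fin n))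
    (xbar : EuclideanSpace ℝ (Fin n))
    (hcontract : ∀ (j : Fin k) (x : EuclideanSpace ℝ (Fin n)) (Lt : ℝ), L ≤ Lt →
      ‖projU (x - (1 / Lt) • gradient (f j) x) - xbar‖ ^ 2 ≤ (1 - δ / Lt) * ‖x - xbar‖ ^ 2)
    (lam : Fin k → ℝ) (hlampos : ∀ j, 0 < lam j) (hlamsum : ∑ j, lam j = 1)
    (i : Fin k) (s : Fin k → EuclideanSpace ℝ (Fin n))
    (stilde : EuclideanSpace ℝ (Fin n))
    (hstilde : stilde =
      (1 / (2 - lam i)) • projU (s i - (lam i / L) • gradient (f i) (s i)) +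
        ∑ j ∈ Finset.univ.erase i,
          (lam j / (2 - lam i)) • projU (s j - (1 / L) • gradient (f j) (s j))) :
    ‖stilde - xbar‖ ^ 2 ≤
      (1 - (Finset.univ.inf' Finset.univ_nonempty lam) * δ / L) *
        Finset.univ.sup' Finset.univ_nonempty (fun j => ‖s j - xbar‖ ^ 2) := by
  classical
  have hL : 0 < L := hδ.trans_le hδL
  have hlamle1 : ∀ j, lam j ≤ 1 := by
    intro j
    rw [← hlamsum]
    exact Finset.single_le_sum (fun j _ => (hlampos j).le) (Finset.mem_univ j)
  have h2 : 0 < 2 - lam i := by linarith [hlamle1 i]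
  set w : Fin k → ℝ := fun j => if j = i then 1 / (2 - lam i) else lam j / (2 - lam i) with hw
  set v : Fin k → EuclideanSpace ℝ (Fin n) := fun j =>
    if j = i then projU (s i - (lam i / L) • gradient (f i) (s i))
    else projU (s j - (1 / L) • gradient (f j) (s j)) with hv
  have hw0 : ∀ j, 0 ≤ w j := by
    intro j; simp only [hw]; split
    · positivity
    · exact div_nonneg (hlampos j).le h2.le
  have hsum_erase : ∑ j ∈ Finset.univ.erase i, lam j = 1 - lam i := by
    have := Finset.add_sum_erase Finset.univ lam (Finset.mem_univ i)
    rw [hlamsum] at this; linarith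
  have hwsum : ∑ j, w j = 1 := by
    rw [← Finset.add_sum_erase Finset.univ w (Finset.mem_univ i)]
    have h1 : w i = 1 / (2 - lam i) := by simp [hw]
    have h2' : ∑ j ∈ Finset.univ.erase i, w j = (1 - lam i) / (2 - lam i) := by
      rw [← hsum_erase, Finset.sum_div]
      refine Finset.sum_congr rfl fun j hj => ?_
      simp [hw, (Finset.mem_erase.1 hj).1]
    rw [h1, h2', ← add_div, div_eq_one_iff_eq h2.ne']
    ring
  have hstilde' : stilde = ∑ j, w j • v j := by
    rw [hstilde, ← Finset.add_sum_erase Finset.univ (fun j => w j • v j) (Finset.mem_univ i)]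
    congr 1
    · simp [hw, hv]
    · refine Finset.sum_congr rfl fun j hj => ?_
      simp [hw, hv, (Finset.mem_erase.1 hj).1]
  have hdiff : stilde - xbar = ∑ j, w j • (v j - xbar) := by
    simp only [smul_sub, Finset.sum_sub_distrib, ← Finset.sum_smul, hwsum, one_smul, hstilde']
  have hconv : ConvexOn ℝ Set.univ (fun x : EuclideanSpace ℝ (Fin n) => ‖x‖ ^ 2) := by
    refine ⟨convex_univ, fun x _ y _ a b ha hb hab => ?_⟩
    have h1 : ‖a • x + b • y‖ ≤ a * ‖x‖ + b * ‖y‖ := by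
      refine (norm_add_le _ _).trans ?_
      rw [norm_smul, norm_smul, Real.norm_eq_abs, Real.norm_eq_abs,
        abs_of_nonneg ha, abs_of_nonneg hb]
    have h2 := mul_self_le_mul_self (norm_nonneg (a • x + b • y)) h1
    simp only [smul_eq_mul]
    nlinarith [sq_nonneg (‖x‖ - ‖y‖), mul_nonneg ha hb, norm_nonneg x, norm_nonneg y]
  have hjensen : ‖stilde - xbar‖ ^ 2 ≤ ∑ j, w j * ‖v j - xbar‖ ^ 2 := by
    rw [hdiff]
    exact hconv.map_sum_le (fun j _ => hw0 j) hwsum (fun j _ => Set.mem_univ _)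
  set M := Finset.univ.sup' Finset.univ_nonempty (fun j => ‖s j - xbar‖ ^ 2) with hM
  have hMle : ∀ j, ‖s j - xbar‖ ^ 2 ≤ M := fun j =>
    Finset.le_sup' (fun j => ‖s j - xbar‖ ^ 2) (Finset.mem_univ j)
  have hM0 : 0 ≤ M := le_trans (by positivity) (hMle i)
  set m := Finset.univ.inf' Finset.univ_nonempty lam with hm
  have hmle : m ≤ lam i := Finset.inf'_le _ (Finset.mem_univ i)
  have hm0 : 0 < m := by
    rw [hm, Finset.lt_inf'_iff]
    exact fun j _ => hlampos j
  set r : Fin k → ℝ := fun j => if j = i then 1 - lam i * δ / L else 1 - δ / L with hr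
  have hδL1 : δ / L ≤ 1 := div_le_one_of_le₀ hδL hL.le
  have hterm : ∀ j, ‖v j - xbar‖ ^ 2 ≤ r j * M := by
    intro j
    by_cases hji : j = i
    · subst hji
      have hLt : L ≤ L / lam j := by
        rw [le_div_iff₀ (hlampos j)]
        nlinarith [hlamle1 j, hL]
      have h1 : (lam j / L : ℝ) = 1 / (L / lam j) := by
        field_simp
      have hct := hcontract j (s j) (L / lam j) hLt
      rw [← h1] at hct
      have heq : δ / (L / lam j) = lam j * δ / L := by
        rw [div_div_eq_mul_div]; ring
      rw [heq] at hct
      have hnn : 0 ≤ 1 - lam j * δ / L := by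
        rw [sub_nonneg, div_le_one hL]
        nlinarith [hlamle1 j]
      calc ‖v j - xbar‖ ^ 2
          = ‖projU (s j - (lam j / L) • gradient (f j) (s j)) - xbar‖ ^ 2 := by simp [hv]
        _ ≤ (1 - lam j * δ / L) * ‖s j - xbar‖ ^ 2 := hct
        _ ≤ (1 - lam j * δ / L) * M := mul_le_mul_of_nonneg_left (hMle j) hnn
        _ = r j * M := by simp [hr]
    · have hct := hcontract j (s j) L le_rfl
      have hnn : 0 ≤ 1 - δ / L := by linarith
      calc ‖v j - xbar‖ ^ 2
          = ‖projU (s j - (1 / L) • gradient (f j) (s j)) - xbar‖ ^ 2 := by simp [hv, hji]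
        _ ≤ (1 - δ / L) * ‖s j - xbar‖ ^ 2 := hct
        _ ≤ (1 - δ / L) * M := mul_le_mul_of_nonneg_left (hMle j) hnn
        _ = r j * M := by simp [hr, hji]
  have hC : ∑ j, w j * r j = 1 - (δ / L) / (2 - lam i) := by
    rw [← Finset.add_sum_erase Finset.univ (fun j => w j * r j) (Finset.mem_univ i)]
    have h1 : ∑ j ∈ Finset.univ.erase i, w j * r j
        = (1 - lam i) * ((1 - δ / L) / (2 - lam i)) := by
      rw [← hsum_erase, Finset.sum_mul]
      refine Finset.sum_congr rfl fun j hj => ?_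
      have hji := (Finset.mem_erase.1 hj).1
      simp only [hw, hr, hji, if_neg hji]
      ring
    rw [h1]
    simp only [hw, hr, if_pos rfl]
    field_simp
    ring
  have hCle : ∑ j, w j * r j ≤ 1 - m * δ / L := by
    rw [hC]
    have hkey : m * (2 - lam i) ≤ 1 := by
      nlinarith [hlamle1 i, hm0.le]
    have : m * δ / L ≤ (δ / L) / (2 - lam i) := by
      rw [div_div, div_le_div_iff₀ hL (by positivity : (0:ℝ) < L * (2 - lam i))]
      nlinarith [mul_le_mul_of_nonneg_left hkey (mul_pos hδ hL).le]
    linarith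
  calc ‖stilde - xbar‖ ^ 2 ≤ ∑ j, w j * ‖v j - xbar‖ ^ 2 := hjensen
    _ ≤ ∑ j, w j * (r j * M) := by
        refine Finset.sum_le_sum fun j _ => mul_le_mul_of_nonneg_left (hterm j) (hw0 j)
    _ = (∑ j, w j * r j) * M := by
        rw [Finset.sum_mul]
        exact Finset.sum_congr rfl fun j _ => by ring
    _ ≤ (1 - m * δ / L) * M := mul_le_mul_of_nonneg_right hCle hM0
end

section
/- Let z₁,...,z_m ∈ ℝⁿ be linearly independent with m ≤ n, set r_j = ‖z_j‖ for each j, and A = {x ∈ ℝⁿ : z_jᵀx equal for all j}. Then 0 ∈ A, A is a linear subspace of dimension n - m + 1, and the common projection c = proj_A(z_j) is nonzero. -/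
open RealInnerProductSpace

section Aux

variable {E : Type*} [NormedAddCommGroup E] [InnerProductSpace ℝ E]

/-- Differences from a base point of a linearly independent family are linearly independent. -/
lemma li_sub_aux {ι : Type*} [Fintype ι] [DecidableEq ι] {z : ι → E}
    (hli : LinearIndependent ℝ z) (j0 : ι) :
    LinearIndependent ℝ (fun i : {i : ι // i ≠ j0} => z i - z j0) := by
  rw [Fintype.linearIndependent_iff]
  intro g hg i
  set g' : ι → ℝ := fun i => if h : i = j0 then -(∑ j : {i : ι // i ≠ j0}, g j) else g ⟨i, h⟩
    with hg'
  have hexp : ∑ j : {i : ι // i ≠ j0}, g j • (z j - z j0)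
      = ∑ j : {i : ι // i ≠ j0}, g j • (z j : E) - (∑ j : {i : ι // i ≠ j0}, g j) • z j0 := by
    simp [smul_sub, Finset.sum_sub_distrib, Finset.sum_smul]
  rw [hexp] at hg
  have hsum : ∑ i : ι, g' i • z i = 0 := by
    rw [Fintype.sum_eq_add_sum_compl j0]
    have h1 : g' j0 = -(∑ j : {i : ι // i ≠ j0}, g j) := by simp [hg']
    have h2 : ∑ i ∈ ({j0}ᶜ : Finset ι), g' i • z i
        = ∑ j : {i : ι // i ≠ j0}, g j • (z j : E) := by
      rw [Finset.sum_subtype (p := fun i => i ≠ j0) ({j0}ᶜ : Finset ι) (by simp)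
        (fun i => g' i • z i)]
      refine Finset.sum_congr rfl fun j _ => ?_
      simp [hg', j.2]
    rw [h1, h2, neg_smul, add_comm, ← sub_eq_add_neg]
    exact hg
  have := Fintype.linearIndependent_iff.mp hli g' hsum i
  simpa [hg', i.2] using this

end Aux

set_option maxHeartbeats 1000000 in
/-- **The base case** (Lemma A.6 of the paper). At base parameters (`r_j = ‖z_j‖` with
`z_1,…,z_m` linearly independent, `m ≤ n`), the central affine subspace
`A = {x : zⱼᵀx` equal for all `j}` contains the origin, is a linear subspace of
dimension `n - m + 1`, and the common projection `c` of the centers onto `A` is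
nonzero. -/
theorem mbp_base_case
    (n m : ℕ) (hm : 0 < m) (hmn : m ≤ n)
    (z : Fin m → EuclideanSpace ℝ (Fin n)) (hli : LinearIndependent ℝ z)
    (r : Fin m → ℝ) (hr : ∀ j, r j = ‖z j‖)
    (A : Set (EuclideanSpace ℝ (Fin n)))
    (hA : A = {x | ∀ i j : Fin m, ⟪z i, x⟫ = ⟪z j, x⟫})
    (c : EuclideanSpace ℝ (Fin n)) (hcA : c ∈ A)
    (hcproj : ∀ j : Fin m, ∀ q ∈ A, ‖z j - c‖ ≤ ‖z j - q‖) :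
    (0 : EuclideanSpace ℝ (Fin n)) ∈ A ∧
    (∃ S : Submodule ℝ (EuclideanSpace ℝ (Fin n)),
      (S : Set (EuclideanSpace ℝ (Fin n))) = A ∧ Module.finrank ℝ S = n - m + 1) ∧
    c ≠ 0 := by
  classical
  set j0 : Fin m := ⟨0, hm⟩ with hj0
  have hliv := li_sub_aux hli j0
  set W : Submodule ℝ (EuclideanSpace ℝ (Fin n)) :=
    Submodule.span ℝ (Set.range (fun i : {i : Fin m // i ≠ j0} => z i - z j0)) with hW
  -- A is the orthogonal complement of W
  have hAW : A = (Wᗮ : Set (EuclideanSpace ℝ (Fin n))) := by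
    rw [hA]
    ext x
    constructor
    · intro hx
      rw [SetLike.mem_coe, Submodule.mem_orthogonal]
      intro u hu
      induction hu using Submodule.span_induction with
      | mem w hw =>
          obtain ⟨i, rfl⟩ := hw
          simp only [inner_sub_left]
          rw [hx i j0]
          ring
      | zero => exact inner_zero_left x
      | add a b _ _ ha hb => rw [inner_add_left, ha, hb]; ring
      | smul t a _ ha => rw [real_inner_smul_left, ha]; ring
    · intro hx i j
      have key : ∀ i : Fin m, ⟪z i, x⟫ = ⟪z j0, x⟫ := by
        intro i
        by_cases h : i = j0
        · rw [h]
        · have hmem : (z i - z j0 : EuclideanSpace ℝ (Fin n)) ∈ W := by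
            apply Submodule.subset_span
            exact ⟨⟨i, h⟩, rfl⟩
          have h0 := (Submodule.mem_orthogonal W x).mp hx _ hmem
          rw [inner_sub_left] at h0
          linarith
      rw [key i, key j]
  have h0A : (0 : EuclideanSpace ℝ (Fin n)) ∈ A := by
    rw [hA]; intro i j; simp
  -- dimension computation
  have hcard : Fintype.card {i : Fin m // i ≠ j0} = m - 1 := by
    simp [Fintype.card_subtype_compl, Fintype.card_fin]
  have hWrank : Module.finrank ℝ W = m - 1 := by
    rw [hW, finrank_span_eq_card hliv, hcard]
  have hErank : Module.finrank ℝ (EuclideanSpace ℝ (Fin n)) = n := finrank_euclideanSpace_fin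
  have horth := Submodule.finrank_add_finrank_orthogonal (K := W)
  rw [hWrank, hErank] at horth
  have hWorank : Module.finrank ℝ (Wᗮ : Submodule ℝ (EuclideanSpace ℝ (Fin n))) = n - m + 1 := by
    omega
  refine ⟨h0A, ⟨Wᗮ, hAW.symm, hWorank⟩, ?_⟩
  -- c ≠ 0
  intro hc0
  -- every z j lies in W
  have hzW : ∀ j : Fin m, z j ∈ W := by
    intro j
    have hperp : ∀ u ∈ Wᗮ, ⟪z j, u⟫ = 0 := by
      intro u hu
      by_cases hy : u = 0
      · simp [hy]
      · set t : ℝ := ⟪z j, u⟫ / (‖u‖ ^ 2) with ht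
        have htu : t • u ∈ A := by
          rw [hAW]; exact Submodule.smul_mem _ t hu
        have h := hcproj j (t • u) htu
        rw [hc0, sub_zero] at h
        have hle : ‖z j‖ ^ 2 ≤ ‖z j - t • u‖ ^ 2 := pow_le_pow_left₀ (norm_nonneg _) h 2
        have hexp : ‖z j - t • u‖ ^ 2
            = ‖z j‖ ^ 2 - 2 * (t * ⟪z j, u⟫) + t ^ 2 * ‖u‖ ^ 2 := by
          rw [norm_sub_sq_real, real_inner_smul_right, norm_smul]
          simp [mul_pow, sq_abs]
        rw [hexp] at hle
        have hN : (0 : ℝ) < ‖u‖ ^ 2 := pow_pos (norm_pos_iff.mpr hy) 2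
        have htN : t * ‖u‖ ^ 2 = ⟪z j, u⟫ := by
          rw [ht]; field_simp
        rw [← htN] at hle
        have ht2 : t ^ 2 * ‖u‖ ^ 2 ≤ 0 := by nlinarith [hle]
        have hsq : ⟪z j, u⟫ ^ 2 ≤ 0 := by
          rw [← htN]; nlinarith [ht2, hN.le]
        have : ⟪z j, u⟫ ^ 2 = 0 := le_antisymm hsq (sq_nonneg _)
        exact pow_eq_zero_iff (n := 2) (by norm_num) |>.mp this
    have hmem : z j ∈ Wᗮᗮ := by
      rw [Submodule.mem_orthogonal']
      intro u hu
      exact hperp u hu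
    rwa [Submodule.orthogonal_orthogonal] at hmem
  have hspan : Submodule.span ℝ (Set.range z) ≤ W := by
    rw [Submodule.span_le]
    rintro _ ⟨j, rfl⟩
    exact hzW j
  have h1 : Module.finrank ℝ (Submodule.span ℝ (Set.range z)) = m := by
    rw [finrank_span_eq_card hli, Fintype.card_fin]
  have h2 := Submodule.finrank_mono hspan
  rw [h1, hWrank] at h2
  omega
end
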